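/- Let V, l : ℕ → ℝ≥0 satisfy V(k) = V(0) - ∑_{j<k} l(j) for all k (so V is nonincreasing), and suppose V(k) ≤ γ l(k) whenever l(k) ≤ ε, where γ ≥ 1 and ε > 0. If l(k₀) ≤ ε for some k₀, then V(k) ≤ ((γ-1)/γ)^{k-k₀} V(k₀) for all k ≥ k₀. -/

import Mathlib

theorem stmt_8 (V l : ℕ → ℝ) (γ ε : ℝ) (k₀ : ℕ)
    (hV : ∀ k, 0 ≤ V k) (hl : ∀ k, 0 ≤ l k)
    (hdp : ∀ k, V k = V 0 - ∑ j ∈ Finset.range k, l j)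
    (hγ : 1 ≤ γ) (hε : 0 < ε)
    (hloc : ∀ k, l k ≤ ε → V k ≤ γ * l k)
    (hlV : ∀ k, l k ≤ V k)
    (hk₀ : l k₀ ≤ ε) :
    ∀ k, k₀ ≤ k → V k ≤ ((γ - 1) / γ) ^ (k - k₀) * V k₀ := by
  have hγ0 : 0 < γ := lt_of_lt_of_le one_pos hγ
  have hmono : ∀ m n, m ≤ n → V n ≤ V m := by
    intro m n hmn
    rw [hdp m, hdp n]
    have : ∑ j ∈ Finset.range m, l j ≤ ∑ j ∈ Finset.range n, l j :=
      Finset.sum_le_sum_of_subset_of_nonneg (Finset.range_subset_range.2 hmn)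
        (fun i _ _ => hl i)
    linarith
  have hVk₀ : V k₀ ≤ γ * ε :=
    le_trans (hloc k₀ hk₀) (mul_le_mul_of_nonneg_left hk₀ (le_of_lt hγ0))
  have hkey : ∀ k, k₀ ≤ k → V (k + 1) ≤ (γ - 1) / γ * V k := by
    intro k hk
    have hVγl : V k ≤ γ * l k := by
      by_cases h : l k ≤ ε
      · exact hloc k h
      · push_neg at h
        calc V k ≤ V k₀ := hmono k₀ k hk
          _ ≤ γ * ε := hVk₀
          _ ≤ γ * l k := by nlinarith
    have hstep : V (k + 1) = V k - l k := by
      rw [hdp (k + 1), hdp k, Finset.sum_range_succ]; ring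
    rw [hstep]
    rw [div_mul_eq_mul_div, le_div_iff₀ hγ0]
    nlinarith
  intro k hk
  induction k, hk using Nat.le_induction with
  | base => simp
  | succ n hn ih =>
    calc V (n + 1) ≤ (γ - 1) / γ * V n := hkey n hn
      _ ≤ (γ - 1) / γ * (((γ - 1) / γ) ^ (n - k₀) * V k₀) := by
          apply mul_le_mul_of_nonneg_left ih
          exact div_nonneg (by linarith) (by linarith)
      _ = ((γ - 1) / γ) ^ (n + 1 - k₀) * V k₀ := by
          rw [Nat.succ_sub hn, pow_succ]; ring
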